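/- If X is a zero-dimensional topological space that is the union of countably many quasi-components of compact subsets of X, then X is σ-compact. -/
import Mathlib


/-- `X` is zero-dimensional: it is nonempty and has a base consisting of clopen sets. -/
def ZeroDim (X : Type*) [TopologicalSpace X] : Prop :=
  Nonempty X ∧ ∀ (x : X) (U : Set X), IsOpen U → x ∈ U →
    ∃ C : Set X, IsClopen C ∧ x ∈ C ∧ C ⊆ U

/-- `𝒰` is a cover of `X` consisting of sets satisfying `P`
(e.g. an open cover for `P = IsOpen`, a clopen cover for `P = IsClopen`). -/
def IsCover {X : Type*} (P : Set X → Prop) (𝒰 : Set (Set X)) : Prop :=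
  (∀ U ∈ 𝒰, P U) ∧ ⋃₀ 𝒰 = Set.univ

/-- The selection principle `S_fin(P-covers, P-covers)`: for every sequence of
`P`-covers `u n` there are finite subsets `v n ⊆ u n` whose union is a cover. -/
def SelFin {X : Type*} (P : Set X → Prop) : Prop :=
  ∀ u : ℕ → Set (Set X), (∀ n, IsCover P (u n)) →
    ∃ v : ℕ → Set (Set X), (∀ n, (v n).Finite ∧ v n ⊆ u n) ∧
      (⋃ n, ⋃₀ v n) = Set.univ

/-- Player ONE has a winning strategy in the selection game `G_fin(P-covers, P-covers)`:
a strategy `σ`, depending on TWO's previous moves, always playing `P`-covers, such that for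
every sequence of legal responses by TWO (finite subsets of the cover just played),
the union of TWO's choices fails to cover. -/
def ONEWinsSel {X : Type*} (P : Set X → Prop) : Prop :=
  ∃ σ : List (Set (Set X)) → Set (Set X),
    (∀ h, IsCover P (σ h)) ∧
    ∀ v : ℕ → Set (Set X),
      (∀ n, (v n).Finite ∧ v n ⊆ σ (List.ofFn fun i : Fin n => v i)) →
      (⋃ n, ⋃₀ v n) ≠ Set.univ

/-- Player TWO has a winning strategy in the selection game `G_fin(P-covers, P-covers)`:
a strategy `τ`, depending on ONE's moves so far, such that against every sequence of
`P`-covers played by ONE, TWO's responses are legal (finite subsets of the corresponding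
cover) and their union is a cover. -/
def TWOWinsSel {X : Type*} (P : Set X → Prop) : Prop :=
  ∃ τ : List (Set (Set X)) → Set (Set X),
    ∀ u : ℕ → Set (Set X), (∀ n, IsCover P (u n)) →
      (∀ n, (τ (List.ofFn fun i : Fin (n + 1) => u i)).Finite ∧
        τ (List.ofFn fun i : Fin (n + 1) => u i) ⊆ u n) ∧
      (⋃ n, ⋃₀ τ (List.ofFn fun i : Fin (n + 1) => u i)) = Set.univ

/-- Player ONE has a winning strategy in the `Q`-`R` game (in round `n`, ONE picks a set
`K n` with `Q (K n)` and TWO responds with a set `U n` with `R (U n)` and `K n ⊆ U n`;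
ONE wins if `⋃ n, U n = univ`).  E.g. `Q = IsCompact`, `R = IsClopen` is the
compact-clopen game; `R = IsOpen` gives the compact-open game. -/
def ONEWinsCC {X : Type*} (Q R : Set X → Prop) : Prop :=
  ∃ σ : List (Set X) → Set X,
    (∀ h, Q (σ h)) ∧
    ∀ v : ℕ → Set X,
      (∀ n, R (v n) ∧ σ (List.ofFn fun i : Fin n => v i) ⊆ v n) →
      (⋃ n, v n) = Set.univ

/-- Player TWO has a winning strategy in the `Q`-`R` game: a strategy `τ`, depending on
ONE's moves so far, such that against every sequence of sets satisfying `Q` played by ONE,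
TWO's responses satisfy `R`, contain ONE's corresponding sets, and fail to cover `X`. -/
def TWOWinsCC {X : Type*} (Q R : Set X → Prop) : Prop :=
  ∃ τ : List (Set X) → Set X,
    ∀ u : ℕ → Set X, (∀ n, Q (u n)) →
      (∀ n, R (τ (List.ofFn fun i : Fin (n + 1) => u i)) ∧
        u n ⊆ τ (List.ofFn fun i : Fin (n + 1) => u i)) ∧
      (⋃ n, τ (List.ofFn fun i : Fin (n + 1) => u i)) ≠ Set.univ

/-- A subset `K` of `X` is mildly compact if every cover of `K` by clopen subsets
of `X` contains a finite subcover. -/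
def MildlyCompact {X : Type*} [TopologicalSpace X] (K : Set X) : Prop :=
  ∀ 𝒰 : Set (Set X), (∀ U ∈ 𝒰, IsClopen U) → K ⊆ ⋃₀ 𝒰 →
    ∃ 𝒱 ⊆ 𝒰, 𝒱.Finite ∧ K ⊆ ⋃₀ 𝒱

/-- The quasi-component of a subset `K` of `X`: the intersection of all clopen
subsets of `X` containing `K`. -/
def QuasiComp {X : Type*} [TopologicalSpace X] (K : Set X) : Set X :=
  ⋂₀ {C : Set X | IsClopen C ∧ K ⊆ C}

/-- If `X` is a zero-dimensional space which is the union of countably many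
quasi-components of compact subsets of `X`, then `X` is σ-compact. -/
theorem stmt15 {X : Type*} [TopologicalSpace X] (hX : ZeroDim X) (K : ℕ → Set X)
    (hK : ∀ i, IsCompact (K i)) (hcov : ⋃ i, QuasiComp (K i) = Set.univ) :
    SigmaCompactSpace X := by
  refine ⟨⟨fun i => QuasiComp (K i), ?_, hcov⟩⟩
  intro i
  apply isCompact_of_finite_subcover
  intro ι U hU hQU
  classical
  -- choose clopen refinements for each point of the quasi-component
  have hchoice : ∀ x : QuasiComp (K i), ∃ (C : Set X) (j : ι),
      IsClopen C ∧ (x : X) ∈ C ∧ C ⊆ U j := by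
    intro ⟨x, hx⟩
    obtain ⟨j, hj⟩ := Set.mem_iUnion.mp (hQU hx)
    obtain ⟨C, hC, hxC, hCU⟩ := hX.2 x (U j) (hU j) hj
    exact ⟨C, j, hC, hxC, hCU⟩
  choose C g hCcl hxC hCU using hchoice
  have hKQ : K i ⊆ QuasiComp (K i) := fun x hx => by
    intro C hC; exact hC.2 hx
  -- K i is covered by the clopen sets C x, x ∈ QuasiComp (K i)
  have hKcover : K i ⊆ ⋃ x : QuasiComp (K i), C x := by
    intro y hy
    exact Set.mem_iUnion.mpr ⟨⟨y, hKQ hy⟩, hxC ⟨y, hKQ hy⟩⟩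
  obtain ⟨t, ht⟩ := (hK i).elim_finite_subcover (fun x : QuasiComp (K i) => C x)
    (fun x => (hCcl x).2) hKcover
  -- the finite union D is clopen and contains K i, hence contains the quasi-component
  set D : Set X := ⋃ x ∈ t, C x with hD
  have hDcl : IsClopen D := isClopen_biUnion_finset (fun x _ => hCcl x)
  have hQD : QuasiComp (K i) ⊆ D := fun y hy => hy D ⟨hDcl, ht⟩
  refine ⟨t.image g, fun y hy => ?_⟩
  obtain ⟨x, hxt, hyC⟩ := Set.mem_iUnion₂.mp (hQD hy)
  exact Set.mem_iUnion₂.mpr ⟨g x, Finset.mem_image_of_mem _ hxt, hCU x hyC⟩
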